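/- Let λ be a regular uncountable cardinal, S ⊆ {δ < λ⁺ : cf(δ) = λ}, C̄ = ⟨C_δ : δ ∈ S⟩ a sequence where each C_δ is a club of δ of order type λ, and h̄ = ⟨h_δ : δ ∈ S⟩ with h_δ : C_δ → λ. Let δ₀ < λ⁺ be a limit ordinal and ⟨f_i : i < δ₀⟩ a ≤-increasing sequence of conditions of the forcing notion Q²_{C̄,h̄} such that sup_{i<δ₀} α_{f_i} ∉ S. Then the union ⋃_{i<δ₀} f_i is a condition of Q²_{C̄,h̄}, hence an upper bound of the sequence. -/

import Mathlib

/-- `C` is a club of the limit ordinal `δ`: a subset of `δ`, unbounded in `δ`,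
closed below `δ`. -/
def IsClubBelow (C : Set Ordinal.{0}) (δ : Ordinal.{0}) : Prop :=
  (∀ α ∈ C, α < δ) ∧ (∀ α < δ, ∃ β ∈ C, α ≤ β) ∧
    ∀ B ⊆ C, B.Nonempty → sSup B < δ → sSup B ∈ C

/-- The order type of a set of ordinals. -/
noncomputable def otype (C : Set Ordinal.{0}) : Ordinal.{1} :=
  Ordinal.type (Subrel ((· < ·) : Ordinal.{0} → Ordinal.{0} → Prop) (· ∈ C))

/-- Conditions of the forcing notion `Q²_{C̄,h̄}`: pairs `(α, f)` with `α < λ⁺`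
representing a function `f : α → λ` such that for every `δ ∈ S` with `δ ≤ α` there is
`γ < δ` with `f β = h δ β` for all `β ∈ C_δ ∖ γ`. -/
def Q2Cond (lam : Cardinal.{0}) (S : Set Ordinal.{0}) (C : Ordinal.{0} → Set Ordinal.{0})
    (h : Ordinal.{0} → Ordinal.{0} → Ordinal.{0})
    (α : Ordinal.{0}) (f : Ordinal.{0} → Ordinal.{0}) : Prop :=
  α < (Order.succ lam).ord ∧ (∀ β < α, f β < lam.ord) ∧
    ∀ δ ∈ S, δ ≤ α → ∃ γ < δ, ∀ β ∈ C δ, γ ≤ β → f β = h δ β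

/-- The order of `Q²_{C̄,h̄}` is extension of functions. -/
def Q2Le (α₀ : Ordinal.{0}) (f₀ : Ordinal.{0} → Ordinal.{0})
    (α₁ : Ordinal.{0}) (f₁ : Ordinal.{0} → Ordinal.{0}) : Prop :=
  α₀ ≤ α₁ ∧ ∀ β < α₀, f₁ β = f₀ β

/-- For `λ` regular uncountable, `S ⊆ {δ < λ⁺ : cf δ = λ}`, clubs `C_δ` of `δ` of order
type `λ` and colourings `h_δ : C_δ → λ`: if `⟨f_i : i < δ₀⟩` is a `≤`-increasing sequence
of conditions of `Q²_{C̄,h̄}` with `δ₀ < λ⁺` limit and `sup_{i<δ₀} α_{f_i} ∉ S`, then the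
union of the `f_i` is a condition of `Q²_{C̄,h̄}`, hence an upper bound of the sequence. -/
theorem stmt10 (lam : Cardinal.{0}) (hreg : lam.IsRegular) (hunc : Cardinal.aleph0 < lam)
    (S : Set Ordinal.{0}) (hS : ∀ δ ∈ S, δ < (Order.succ lam).ord ∧ δ.cof = lam)
    (C : Ordinal.{0} → Set Ordinal.{0})
    (hC : ∀ δ ∈ S, IsClubBelow (C δ) δ ∧ otype (C δ) = Ordinal.lift.{1} lam.ord)
    (h : Ordinal.{0} → Ordinal.{0} → Ordinal.{0})
    (hh : ∀ δ ∈ S, ∀ β ∈ C δ, h δ β < lam.ord)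
    (δ₀ : Ordinal.{0}) (hlim : Order.IsSuccLimit δ₀) (hδ₀ : δ₀ < (Order.succ lam).ord)
    (α : Ordinal.{0} → Ordinal.{0}) (f : Ordinal.{0} → Ordinal.{0} → Ordinal.{0})
    (hcond : ∀ i < δ₀, Q2Cond lam S C h (α i) (f i))
    (hmono : ∀ i j : Ordinal.{0}, i ≤ j → j < δ₀ → Q2Le (α i) (f i) (α j) (f j))
    (hsup : sSup {β : Ordinal.{0} | ∃ i < δ₀, β = α i} ∉ S) :
    ∃ f' : Ordinal.{0} → Ordinal.{0},
      Q2Cond lam S C h (sSup {β : Ordinal.{0} | ∃ i < δ₀, β = α i}) f' ∧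
      ∀ i < δ₀, Q2Le (α i) (f i) (sSup {β : Ordinal.{0} | ∃ j < δ₀, β = α j}) f' := by
  classical
  set T : Set Ordinal.{0} := {β : Ordinal.{0} | ∃ i < δ₀, β = α i} with hT
  have key : ∀ i j, i < δ₀ → j < δ₀ → ∀ β, β < α i → β < α j → f i β = f j β := by
    intro i j hi hj β hβi hβj
    rcases le_total i j with hij | hij
    · exact ((hmono i j hij hj).2 β hβi).symm
    · exact (hmono j i hij hi).2 β hβj
  set f' : Ordinal.{0} → Ordinal.{0} :=
    fun β => if hβ : ∃ i, i < δ₀ ∧ β < α i then f hβ.choose β else 0 with hf'def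
  have hf' : ∀ i, i < δ₀ → ∀ β, β < α i → f' β = f i β := by
    intro i hi β hβ
    have hex : ∃ j, j < δ₀ ∧ β < α j := ⟨i, hi, hβ⟩
    simp only [hf'def, dif_pos hex]
    exact key hex.choose i hex.choose_spec.1 hi β hex.choose_spec.2 hβ
  have hzero : (0 : Ordinal.{0}) < δ₀ := hlim.pos
  have hTne : T.Nonempty := ⟨α 0, 0, hzero, rfl⟩
  have hTbdd : BddAbove T := by
    refine ⟨(Order.succ lam).ord, ?_⟩
    rintro β ⟨i, hi, rfl⟩
    exact ((hcond i hi).1).le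
  set g : δ₀.ToType → Ordinal.{0} :=
    fun x => α ((Ordinal.ToType.mk (o := δ₀)).symm x) with hgdef
  have hrange : T = Set.range g := by
    ext β
    constructor
    · rintro ⟨i, hi, rfl⟩
      exact ⟨Ordinal.ToType.mk (o := δ₀) ⟨i, hi⟩, by simp [hgdef]⟩
    · rintro ⟨x, rfl⟩
      exact ⟨((Ordinal.ToType.mk (o := δ₀)).symm x : Ordinal),
        ((Ordinal.ToType.mk (o := δ₀)).symm x).2, rfl⟩
  have hsucc : (Order.succ lam).IsRegular := Cardinal.isRegular_succ hreg.aleph0_le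
  have hAlt : sSup T < (Order.succ lam).ord := by
    rw [hrange, ← iSup]
    refine Ordinal.iSup_lt_ord ?_ ?_
    · rw [Cardinal.mk_toType, hsucc.cof_eq]
      exact (Cardinal.lt_ord).1 hδ₀
    · intro x
      exact (hcond _ ((Ordinal.ToType.mk (o := δ₀)).symm x).2).1
  -- membership characterizations of sSup T
  have hlt_sup : ∀ β, β < sSup T ↔ ∃ i, i < δ₀ ∧ β < α i := by
    intro β
    rw [lt_csSup_iff hTbdd hTne]
    constructor
    · rintro ⟨b, ⟨i, hi, rfl⟩, hb⟩
      exact ⟨i, hi, hb⟩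
    · rintro ⟨i, hi, hb⟩
      exact ⟨α i, ⟨i, hi, rfl⟩, hb⟩
  refine ⟨f', ⟨hAlt, ?_, ?_⟩, ?_⟩
  · intro β hβ
    obtain ⟨i, hi, hβi⟩ := (hlt_sup β).1 hβ
    rw [hf' i hi β hβi]
    exact (hcond i hi).2.1 β hβi
  · intro δ hδ hδle
    have hδlt : δ < sSup T := lt_of_le_of_ne hδle (by rintro rfl; exact hsup hδ)
    obtain ⟨i, hi, hδi⟩ := (hlt_sup δ).1 hδlt
    obtain ⟨γ, hγ, hγ'⟩ := (hcond i hi).2.2 δ hδ hδi.le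
    refine ⟨γ, hγ, fun β hβ hγβ => ?_⟩
    have hβδ : β < δ := (hC δ hδ).1.1 β hβ
    rw [hf' i hi β (hβδ.trans hδi)]
    exact hγ' β hβ hγβ
  · intro i hi
    exact ⟨le_csSup hTbdd ⟨i, hi, rfl⟩, fun β hβ => hf' i hi β hβ⟩
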